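/- For every n ≥ 0 and every 0 ≤ k ≤ n, the number of length-n edge paths from the root (0,0) to the vertex (n,k) of the Euler graph — i.e., the cardinality of the set of finite words (x_0,…,x_{n−1}) with x_i ∈ Fin(i+2) whose associated vertex labels satisfy k_n = k — equals the Eulerian number A(n,k), the number of permutations σ of {0,1,…,n} with exactly k rises (indices 0 ≤ i < n with σ(i) < σ(i+1)). -/
import Mathlib


open MeasureTheory Filter

/-- The Euler path space. -/
abbrev EulerPath : Type := ∀ n : ℕ, Fin (n + 2)

/-- Vertex labels: `kv x n` is the `k` with the path `x` passing through vertex `(n,k)`. -/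
def kv (x : EulerPath) : ℕ → ℕ
  | 0 => 0
  | n + 1 => if (x n : ℕ) ≤ kv x n then kv x n else kv x n + 1

/-- Extend a finite word `(x_0, …, x_{n-1})` with `x_i ∈ Fin (i+2)` to an infinite path
(by zeros); since `kv · n` only depends on the first `n` coordinates, this lets us speak
of the vertex labels of a finite edge path. -/
def extendWord {n : ℕ} (c : ∀ i : Fin n, Fin (i.1 + 2)) : EulerPath :=
  fun i => if h : i < n then c ⟨i, h⟩ else 0

/-- The Eulerian number `A(n,k)`: the number of permutations `σ` of `{0,1,…,n}` with
exactly `k` rises, i.e. indices `0 ≤ i < n` with `σ i < σ (i+1)`. -/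
noncomputable def eulerianNumber (n k : ℕ) : ℕ :=
  Nat.card {σ : Equiv.Perm (Fin (n + 1)) //
    (Finset.univ.filter fun i : Fin n => σ i.castSucc < σ i.succ).card = k}

namespace EulerAux

open Finset Equiv

/-! ### Generic helper: filters over `Fin m` vs filters over `range m` -/

lemma card_fin_filter {m : ℕ} (P : Fin m → Prop) [DecidablePred P] (Q : ℕ → Prop)
    [DecidablePred Q] (h : ∀ i : Fin m, P i ↔ Q i.1) :
    (Finset.univ.filter P).card = ((Finset.range m).filter Q).card := by
  apply Finset.card_bij (fun p _ => p.1)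
  · intro a ha
    simp only [mem_filter, mem_univ, true_and] at ha
    simp [mem_filter, a.isLt, (h a).1 ha]
  · intro a _ b _ hab
    exact Fin.val_injective hab
  · intro b hb
    simp only [mem_filter, mem_range] at hb
    exact ⟨⟨b, hb.1⟩, by simp [mem_filter, (h ⟨b, hb.1⟩).2 hb.2], rfl⟩

/-! ### The `kv` function on words -/

lemma kv_congr {x y : EulerPath} (m : ℕ) (h : ∀ i < m, x i = y i) : kv x m = kv y m := by
  induction m with
  | zero => rfl
  | succ m ih =>
    have h1 : kv x m = kv y m := ih fun i hi => h i (by omega)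
    have h2 : x m = y m := h m (by omega)
    simp only [kv, h1, h2]

lemma kv_le (x : EulerPath) (m : ℕ) : kv x m ≤ m := by
  induction m with
  | zero => exact le_refl 0
  | succ m ih =>
    simp only [kv]
    split <;> omega

/-- Words of length `n`. -/
abbrev Word (n : ℕ) : Type := ∀ i : Fin n, Fin (i.1 + 2)

/-- The endpoint label of a finite word. -/
def kw {n : ℕ} (c : Word n) : ℕ := kv (extendWord c) n

lemma kw_le {n : ℕ} (c : Word n) : kw c ≤ n := kv_le _ _

/-- Appending a letter to a word, as an equivalence. -/
def wEquiv (n : ℕ) : Fin (n + 2) × Word n ≃ Word (n + 1) :=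
  Fin.snocEquiv (fun i : Fin (n + 1) => Fin (i.1 + 2))

lemma kw_wEquiv {n : ℕ} (x : Fin (n + 2)) (c : Word n) :
    kw (wEquiv n (x, c)) = if (x : ℕ) ≤ kw c then kw c else kw c + 1 := by
  have hlast : extendWord (wEquiv n (x, c)) n = x := by
    simp only [extendWord, dif_pos (Nat.lt_succ_self n)]
    exact Fin.snoc_last (α := fun i : Fin (n + 1) => Fin (i.1 + 2)) (x := x) (p := c)
  have hinit : kv (extendWord (wEquiv n (x, c))) n = kv (extendWord c) n := by
    apply kv_congr
    intro i hi
    simp only [extendWord, dif_pos (by omega : i < n + 1), dif_pos hi]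
    exact Fin.snoc_castSucc (α := fun i : Fin (n + 1) => Fin (i.1 + 2)) (x := x) (p := c)
      (i := ⟨i, hi⟩)
  show kv (extendWord (wEquiv n (x, c))) (n + 1) = _
  simp only [kv, hlast, hinit]
  rfl

/-! ### Counting letters extending a word towards a given endpoint -/

lemma card_letters {n : ℕ} (m k : ℕ) (hm : m ≤ n) :
    (Finset.univ.filter fun x : Fin (n + 2) =>
        (if (x : ℕ) ≤ m then m else m + 1) = k).card
      = (if m = k then k + 1 else 0) + (if m + 1 = k then n + 1 - m else 0) := by
  rw [card_fin_filter _ (fun j => (if j ≤ m then m else m + 1) = k) (fun i => Iff.rfl)]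
  rcases eq_or_ne m k with rfl | hmk
  · have h1 : ((Finset.range (n + 2)).filter fun j => (if j ≤ m then m else m + 1) = m)
        = Finset.range (m + 1) := by
      ext j
      simp only [mem_filter, mem_range]
      split_ifs <;> omega
    rw [h1]
    simp
  · rcases eq_or_ne (m + 1) k with hk | hk
    · have h1 : ((Finset.range (n + 2)).filter fun j => (if j ≤ m then m else m + 1) = k)
          = (Finset.range (n + 2)).filter fun j => ¬ j ≤ m := by
        ext j
        simp only [mem_filter, mem_range]
        split_ifs <;> omega
      have h3 : ((Finset.range (n + 2)).filter fun j => j ≤ m) = Finset.range (m + 1) := by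
        ext j
        simp only [mem_filter, mem_range]
        omega
      rw [h1, Finset.filter_not, h3,
        Finset.card_sdiff_of_subset (by intro j hj; simp only [mem_range] at hj ⊢; omega)]
      simp only [Finset.card_range]
      split_ifs <;> omega
    · have h1 : ((Finset.range (n + 2)).filter fun j => (if j ≤ m then m else m + 1) = k)
          = ∅ := by
        ext j
        simp only [mem_filter, mem_range, Finset.notMem_empty, iff_false, not_and]
        intro _
        split_ifs <;> omega
      rw [h1]
      simp [hmk, hk]

/-! ### Rises of a permutation -/

/-- The number of rises of a permutation of `Fin (m+1)`. -/
def rises {m : ℕ} (σ : Equiv.Perm (Fin (m + 1))) : ℕ :=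
  (Finset.univ.filter fun i : Fin m => σ i.castSucc < σ i.succ).card

/-- The values of a permutation, as a function `ℕ → ℕ`. -/
def fv {m : ℕ} (σ : Equiv.Perm (Fin m)) (j : ℕ) : ℕ :=
  if h : j < m then (σ ⟨j, h⟩ : ℕ) else 0

lemma fv_le {m : ℕ} (σ : Equiv.Perm (Fin (m + 1))) (j : ℕ) : fv σ j ≤ m := by
  unfold fv
  split
  · exact Nat.lt_succ_iff.mp (σ _).isLt
  · exact Nat.zero_le m

/-- The rise set of `σ`, as a subset of `range m`. -/
def riseSet {m : ℕ} (σ : Equiv.Perm (Fin (m + 1))) : Finset ℕ :=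
  (Finset.range m).filter fun j => fv σ j < fv σ (j + 1)

lemma rises_eq_card_riseSet {m : ℕ} (σ : Equiv.Perm (Fin (m + 1))) :
    rises σ = (riseSet σ).card := by
  apply card_fin_filter
  intro i
  have h1 : fv σ i.1 = σ i.castSucc := by
    rw [fv, dif_pos (by omega : i.1 < m + 1)]
    congr 1
  have h2 : fv σ (i.1 + 1) = σ i.succ := by
    rw [fv, dif_pos (by omega : i.1 + 1 < m + 1)]
    congr 1
  rw [h1, h2]
  exact Iff.rfl

lemma rises_le {m : ℕ} (σ : Equiv.Perm (Fin (m + 1))) : rises σ ≤ m := by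
  rw [rises_eq_card_riseSet]
  calc (riseSet σ).card ≤ (Finset.range m).card := Finset.card_filter_le _ _
  _ = m := Finset.card_range m

/-! ### Inserting the maximum into a permutation -/

/-- Insert the value `n+1` at position `p` in the permutation `σ`, as a function. -/
def insFun {n : ℕ} (σ : Equiv.Perm (Fin (n + 1))) (p : Fin (n + 2)) :
    Fin (n + 2) → Fin (n + 2) :=
  p.insertNth (Fin.last (n + 1)) (fun i => (σ i).castSucc)

lemma insFun_apply_same {n : ℕ} (σ : Equiv.Perm (Fin (n + 1))) (p : Fin (n + 2)) :
    insFun σ p p = Fin.last (n + 1) :=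
  Fin.insertNth_apply_same _ _ _

lemma insFun_apply_succAbove {n : ℕ} (σ : Equiv.Perm (Fin (n + 1))) (p : Fin (n + 2))
    (i : Fin (n + 1)) : insFun σ p (p.succAbove i) = (σ i).castSucc :=
  Fin.insertNth_apply_succAbove _ _ _ _

lemma insFun_injective {n : ℕ} (σ : Equiv.Perm (Fin (n + 1))) (p : Fin (n + 2)) :
    Function.Injective (insFun σ p) := by
  intro a b hab
  rcases eq_or_ne a p with ha | ha
  · rcases eq_or_ne b p with hb | hb
    · rw [ha, hb]
    · exfalso
      obtain ⟨j, hj⟩ := Fin.exists_succAbove_eq hb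
      rw [ha, insFun_apply_same, ← hj, insFun_apply_succAbove] at hab
      exact (Fin.castSucc_lt_last _).ne hab.symm
  · obtain ⟨i, hi⟩ := Fin.exists_succAbove_eq ha
    rcases eq_or_ne b p with hb | hb
    · exfalso
      rw [hb, insFun_apply_same, ← hi, insFun_apply_succAbove] at hab
      exact (Fin.castSucc_lt_last _).ne hab
    · obtain ⟨j, hj⟩ := Fin.exists_succAbove_eq hb
      rw [← hi, ← hj, insFun_apply_succAbove, insFun_apply_succAbove] at hab
      rw [← hi, ← hj, σ.injective (Fin.castSucc_injective _ hab)]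

/-- Insert the value `n+1` at position `p` in the permutation `σ`. -/
noncomputable def ins {n : ℕ} (σ : Equiv.Perm (Fin (n + 1))) (p : Fin (n + 2)) : Equiv.Perm (Fin (n + 2)) :=
  Equiv.ofBijective _ ((Finite.injective_iff_bijective).mp (insFun_injective σ p))

lemma ins_apply {n : ℕ} (σ : Equiv.Perm (Fin (n + 1))) (p : Fin (n + 2)) (a : Fin (n + 2)) :
    ins σ p a = insFun σ p a := rfl

/-- Insertion as an equivalence. -/
noncomputable def insEquiv (n : ℕ) :
    (Equiv.Perm (Fin (n + 1)) × Fin (n + 2)) ≃ Equiv.Perm (Fin (n + 2)) := by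
  refine Equiv.ofBijective (fun q => ins q.1 q.2)
    ((Fintype.bijective_iff_injective_and_card _).mpr ⟨?_, ?_⟩)
  · rintro ⟨σ₁, p₁⟩ ⟨σ₂, p₂⟩ h
    have hfun : ∀ a, insFun σ₁ p₁ a = insFun σ₂ p₂ a := fun a => by
      have := congrArg (fun τ : Equiv.Perm (Fin (n + 2)) => τ a) h
      simpa [ins_apply] using this
    have hp : p₁ = p₂ := by
      by_contra hne
      obtain ⟨j, hj⟩ := Fin.exists_succAbove_eq hne
      have h1 : insFun σ₁ p₁ p₁ = Fin.last (n + 1) := insFun_apply_same _ _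
      have h2 : insFun σ₂ p₂ p₁ = ((σ₂ j).castSucc) := by
        rw [← hj, insFun_apply_succAbove]
      rw [hfun p₁, h2] at h1
      exact absurd h1 (Fin.castSucc_lt_last _).ne
    subst hp
    have hσ : σ₁ = σ₂ := by
      ext i
      have := hfun (p₁.succAbove i)
      rw [insFun_apply_succAbove, insFun_apply_succAbove] at this
      exact congrArg Fin.val (Fin.castSucc_injective _ this)
    rw [hσ]
  · simp only [Fintype.card_prod, Fintype.card_perm, Fintype.card_fin, Nat.factorial_succ]
    ring

lemma insEquiv_apply {n : ℕ} (σ : Equiv.Perm (Fin (n + 1))) (p : Fin (n + 2)) :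
    insEquiv n (σ, p) = ins σ p := rfl

/-- Values of the inserted permutation. -/
lemma fv_ins {n : ℕ} (σ : Equiv.Perm (Fin (n + 1))) (p : Fin (n + 2)) (j : ℕ)
    (hj : j < n + 2) :
    fv (ins σ p) j
      = if j = p.1 then n + 1 else if j < p.1 then fv σ j else fv σ (j - 1) := by
  have hval : fv (ins σ p) j = (insFun σ p ⟨j, hj⟩ : ℕ) := by
    rw [fv, dif_pos hj]; rfl
  rcases eq_or_ne j p.1 with hjp | hjp
  · have : (⟨j, hj⟩ : Fin (n + 2)) = p := Fin.ext hjp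
    rw [hval, this, insFun_apply_same, if_pos hjp, Fin.val_last]
  · have hne : (⟨j, hj⟩ : Fin (n + 2)) ≠ p := fun h => hjp (congrArg Fin.val h)
    obtain ⟨i, hi⟩ := Fin.exists_succAbove_eq hne
    rw [hval, ← hi, insFun_apply_succAbove, if_neg hjp]
    rcases lt_or_ge i.castSucc p with hcase | hcase
    · rw [Fin.succAbove_of_castSucc_lt _ _ hcase] at hi
      have hij : i.1 = j := congrArg Fin.val hi
      have hjlt : j < p.1 := by
        have := hcase
        rw [Fin.lt_iff_val_lt_val] at this
        simpa [hij] using this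
      rw [if_pos hjlt]
      show ((σ i).castSucc : ℕ) = fv σ j
      rw [Fin.coe_castSucc]
      simp only [fv]
      rw [dif_pos (show j < n + 1 by omega)]
      exact congrArg (fun t => ((σ t : Fin (n + 1)) : ℕ))
        (Fin.ext (show i.1 = j from hij) : i = ⟨j, by omega⟩)
    · rw [Fin.succAbove_of_le_castSucc _ _ hcase] at hi
      have hij : i.1 + 1 = j := congrArg Fin.val hi
      have hjge : ¬ j < p.1 := by
        rw [Fin.le_iff_val_le_val] at hcase
        simp only [Fin.coe_castSucc] at hcase
        omega
      rw [if_neg hjge]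
      show ((σ i).castSucc : ℕ) = fv σ (j - 1)
      rw [Fin.coe_castSucc]
      simp only [fv]
      rw [dif_pos (show j - 1 < n + 1 by omega)]
      exact congrArg (fun t => ((σ t : Fin (n + 1)) : ℕ))
        (Fin.ext (show i.1 = j - 1 by omega) : i = ⟨j - 1, by omega⟩)

/-- `p` is a "good" position for insertion into `σ` (rise count preserved). -/
def goodP {n : ℕ} (σ : Equiv.Perm (Fin (n + 1))) (p : Fin (n + 2)) : Prop :=
  p.1 = 0 ∨ (1 ≤ p.1 ∧ p.1 - 1 ∈ riseSet σ)

instance {n : ℕ} (σ : Equiv.Perm (Fin (n + 1))) (p : Fin (n + 2)) :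
    Decidable (goodP σ p) := by unfold goodP; infer_instance

/-- Key lemma: the rise count of the inserted permutation. -/
lemma rises_ins {n : ℕ} (σ : Equiv.Perm (Fin (n + 1))) (p : Fin (n + 2)) :
    rises (ins σ p) = if goodP σ p then rises σ else rises σ + 1 := by
  classical
  have hle : ∀ j, fv σ j ≤ n := fv_le σ
  have hble : p.1 ≤ n + 1 := Nat.lt_succ_iff.mp p.isLt
  have hS : riseSet (ins σ p)
      = ((riseSet σ).filter fun j => j + 1 ≠ p.1).image
          (fun j => if j + 1 < p.1 then j else j + 1)
        ∪ (if 1 ≤ p.1 then {p.1 - 1} else (∅ : Finset ℕ)) := by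
    ext j
    simp only [riseSet, Finset.mem_union, Finset.mem_image, Finset.mem_filter,
      Finset.mem_range]
    constructor
    · rintro ⟨hj, hC⟩
      rw [fv_ins σ p j (by omega), fv_ins σ p (j + 1) (by omega)] at hC
      rcases Nat.lt_trichotomy (j + 1) p.1 with h1 | h1 | h1
      · rw [if_neg (show ¬ j = p.1 by omega), if_pos (show j < p.1 by omega),
          if_neg (show ¬ j + 1 = p.1 by omega), if_pos (show j + 1 < p.1 from h1)] at hC
        exact Or.inl ⟨j, ⟨⟨by omega, hC⟩, by omega⟩, if_pos h1⟩
      · refine Or.inr ?_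
        rw [if_pos (by omega)]
        simp only [Finset.mem_singleton]
        omega
      · rcases Nat.lt_trichotomy j p.1 with h2 | h2 | h2
        · omega
        · rw [if_pos (show j = p.1 from h2), if_neg (show ¬ j + 1 = p.1 by omega),
            if_neg (show ¬ j + 1 < p.1 by omega)] at hC
          have := hle (j + 1 - 1)
          omega
        · rw [if_neg (show ¬ j = p.1 by omega), if_neg (show ¬ j < p.1 by omega),
            if_neg (show ¬ j + 1 = p.1 by omega), if_neg (show ¬ j + 1 < p.1 by omega)] at hC
          refine Or.inl ⟨j - 1, ⟨⟨by omega, ?_⟩, by omega⟩, ?_⟩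
          · have e1 : j - 1 + 1 = j + 1 - 1 := by omega
            rw [e1]
            exact hC
          · rw [if_neg (by omega)]
            omega
    · intro h
      rcases h with ⟨j', ⟨⟨hj'n, hC⟩, hne⟩, rfl⟩ | hT
      · by_cases h1 : j' + 1 < p.1
        · rw [if_pos h1]
          refine ⟨by omega, ?_⟩
          rw [fv_ins σ p j' (by omega), fv_ins σ p (j' + 1) (by omega),
            if_neg (show ¬ j' = p.1 by omega), if_pos (show j' < p.1 by omega),
            if_neg (show ¬ j' + 1 = p.1 by omega), if_pos (show j' + 1 < p.1 from h1)]
          exact hC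
        · rw [if_neg h1]
          refine ⟨by omega, ?_⟩
          rw [fv_ins σ p (j' + 1) (by omega), fv_ins σ p (j' + 1 + 1) (by omega),
            if_neg (show ¬ j' + 1 = p.1 from hne), if_neg (show ¬ j' + 1 < p.1 by omega),
            if_neg (show ¬ j' + 1 + 1 = p.1 by omega),
            if_neg (show ¬ j' + 1 + 1 < p.1 by omega)]
          simpa using hC
      · have h1 : 1 ≤ p.1 := by
          by_contra h
          rw [if_neg h] at hT
          exact absurd hT (Finset.notMem_empty _)
        rw [if_pos h1, Finset.mem_singleton] at hT
        subst hT
        refine ⟨by omega, ?_⟩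
        rw [fv_ins σ p (p.1 - 1) (by omega), fv_ins σ p (p.1 - 1 + 1) (by omega),
          if_neg (show ¬ p.1 - 1 = p.1 by omega), if_pos (show p.1 - 1 < p.1 by omega),
          if_pos (show p.1 - 1 + 1 = p.1 by omega)]
        have := hle (p.1 - 1)
        omega
  have hdisj : Disjoint (((riseSet σ).filter fun j => j + 1 ≠ p.1).image
          (fun j => if j + 1 < p.1 then j else j + 1))
        (if 1 ≤ p.1 then {p.1 - 1} else (∅ : Finset ℕ)) := by
    rw [Finset.disjoint_right]
    intro a haT haI
    by_cases h1 : 1 ≤ p.1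
    · rw [if_pos h1, Finset.mem_singleton] at haT
      simp only [Finset.mem_image, Finset.mem_filter] at haI
      obtain ⟨j', ⟨_, hne⟩, hF⟩ := haI
      split_ifs at hF <;> omega
    · rw [if_neg h1] at haT
      exact absurd haT (Finset.notMem_empty _)
  have hinj : Set.InjOn (fun j => if j + 1 < p.1 then j else j + 1)
      ((riseSet σ).filter fun j => j + 1 ≠ p.1) := by
    intro a ha b hb hab
    simp only [Finset.coe_filter, Set.mem_setOf_eq] at ha hb
    simp only at hab
    split_ifs at hab <;> omega
  have hfe : (riseSet σ).filter (fun j => j + 1 = p.1)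
      = if 1 ≤ p.1 ∧ p.1 - 1 ∈ riseSet σ then {p.1 - 1} else ∅ := by
    split_ifs with h
    · ext a
      simp only [Finset.mem_filter, Finset.mem_singleton]
      constructor
      · rintro ⟨_, he⟩
        omega
      · rintro rfl
        exact ⟨h.2, by omega⟩
    · ext a
      simp only [Finset.mem_filter, Finset.notMem_empty, iff_false, not_and]
      intro ha he
      exact h ⟨by omega, by rwa [show p.1 - 1 = a by omega]⟩
  have hsplit := Finset.card_filter_add_card_filter_not
    (s := riseSet σ) (p := fun j => j + 1 = p.1)
  rw [hfe] at hsplit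
  have hrpos : p.1 - 1 ∈ riseSet σ → 1 ≤ (riseSet σ).card := fun hm =>
    Finset.card_pos.mpr ⟨_, hm⟩
  rw [rises_eq_card_riseSet, rises_eq_card_riseSet, hS,
    Finset.card_union_of_disjoint hdisj, Finset.card_image_of_injOn hinj]
  have hTcard : (if 1 ≤ p.1 then ({p.1 - 1} : Finset ℕ) else ∅).card
      = if 1 ≤ p.1 then 1 else 0 := by
    split_ifs <;> simp
  rw [hTcard]
  by_cases hb0 : p.1 = 0
  · have hg : goodP σ p := Or.inl hb0
    rw [if_pos hg, if_neg (by omega)]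
    have : ¬ (1 ≤ p.1 ∧ p.1 - 1 ∈ riseSet σ) := by
      rintro ⟨h, _⟩
      omega
    rw [if_neg this] at hsplit
    simp only [Finset.card_empty] at hsplit
    have hfc : ((riseSet σ).filter fun j => ¬ j + 1 = p.1)
        = (riseSet σ).filter fun j => j + 1 ≠ p.1 := rfl
    rw [hfc] at hsplit
    omega
  · by_cases hmem : p.1 - 1 ∈ riseSet σ
    · have hg : goodP σ p := Or.inr ⟨by omega, hmem⟩
      rw [if_pos hg, if_pos (by omega)]
      rw [if_pos ⟨by omega, hmem⟩] at hsplit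
      simp only [Finset.card_singleton] at hsplit
      have hfc : ((riseSet σ).filter fun j => ¬ j + 1 = p.1)
          = (riseSet σ).filter fun j => j + 1 ≠ p.1 := rfl
      rw [hfc] at hsplit
      omega
    · have hg : ¬ goodP σ p := by
        rintro (h | ⟨_, h⟩)
        exacts [hb0 h, hmem h]
      rw [if_neg hg, if_pos (by omega)]
      rw [if_neg (by rintro ⟨_, h⟩; exact hmem h)] at hsplit
      simp only [Finset.card_empty] at hsplit
      have hfc : ((riseSet σ).filter fun j => ¬ j + 1 = p.1)
          = (riseSet σ).filter fun j => j + 1 ≠ p.1 := rfl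
      rw [hfc] at hsplit
      omega

/-! ### Counting positions with a prescribed rise count after insertion -/

lemma card_goodP {n : ℕ} (σ : Equiv.Perm (Fin (n + 1))) :
    (Finset.univ.filter fun p : Fin (n + 2) => goodP σ p).card = rises σ + 1 := by
  classical
  rw [card_fin_filter (fun p : Fin (n + 2) => goodP σ p)
      (fun b => b = 0 ∨ (1 ≤ b ∧ b - 1 ∈ riseSet σ)) (fun p => Iff.rfl)]
  have h1 : ((Finset.range (n + 2)).filter fun b => b = 0 ∨ (1 ≤ b ∧ b - 1 ∈ riseSet σ))
      = insert 0 ((riseSet σ).image (· + 1)) := by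
    ext b
    simp only [mem_filter, mem_range, Finset.mem_insert, Finset.mem_image]
    constructor
    · rintro ⟨hb, h0 | ⟨h1b, hmem⟩⟩
      · exact Or.inl h0
      · exact Or.inr ⟨b - 1, hmem, by omega⟩
    · rintro (rfl | ⟨a, ha, rfl⟩)
      · exact ⟨by omega, Or.inl rfl⟩
      · have han : a < n := by
          have := (Finset.mem_filter.mp ha).1
          exact Finset.mem_range.mp this
        refine ⟨by omega, Or.inr ⟨by omega, ?_⟩⟩
        rw [show a + 1 - 1 = a by omega]
        exact ha
  rw [h1, Finset.card_insert_of_notMem (by simp),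
    Finset.card_image_of_injective _ (fun a b h => by omega), rises_eq_card_riseSet]

lemma card_pos_count {n : ℕ} (σ : Equiv.Perm (Fin (n + 1))) (k : ℕ) :
    (Finset.univ.filter fun p : Fin (n + 2) => rises (ins σ p) = k).card
      = (if rises σ = k then k + 1 else 0)
        + (if rises σ + 1 = k then n + 1 - rises σ else 0) := by
  classical
  have hr := rises_le σ
  have hgood := card_goodP σ
  have hsplit := Finset.card_filter_add_card_filter_not
    (s := (Finset.univ : Finset (Fin (n + 2)))) (p := fun p => goodP σ p)
  rcases eq_or_ne (rises σ) k with hk | hk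
  · have heq : (Finset.univ.filter fun p : Fin (n + 2) => rises (ins σ p) = k)
        = Finset.univ.filter fun p => goodP σ p := by
      apply Finset.filter_congr
      intro p _
      rw [rises_ins]
      split_ifs with h
      · simp [hk, h]
      · simp only [h, iff_false]
        omega
    rw [heq, hgood, if_pos hk, if_neg (by omega)]
    omega
  · rcases eq_or_ne (rises σ + 1) k with hk2 | hk2
    · have heq : (Finset.univ.filter fun p : Fin (n + 2) => rises (ins σ p) = k)
          = Finset.univ.filter fun p => ¬ goodP σ p := by
        apply Finset.filter_congr
        intro p _
        rw [rises_ins]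
        split_ifs with h
        · simp only [h, not_true, iff_false]
          omega
        · simp only [h, not_false_iff, iff_true]
          omega
      rw [heq]
      rw [hgood] at hsplit
      have hcu : (Finset.univ : Finset (Fin (n + 2))).card = n + 2 := by
        simp
      rw [hcu] at hsplit
      rw [if_neg hk, if_pos hk2]
      omega
    · have heq : (Finset.univ.filter fun p : Fin (n + 2) => rises (ins σ p) = k)
          = ∅ := by
        rw [Finset.filter_eq_empty_iff]
        intro p _
        rw [rises_ins]
        split_ifs <;> omega
      rw [heq, if_neg hk, if_neg hk2]
      simp

/-! ### The two counting functions -/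

/-- The number of permutations of `Fin (n+1)` with `k` rises. -/
noncomputable def permCount (n k : ℕ) : ℕ :=
  (Finset.univ.filter fun σ : Equiv.Perm (Fin (n + 1)) => rises σ = k).card

/-- The number of words of length `n` with endpoint `k`. -/
noncomputable def pathCount (n k : ℕ) : ℕ :=
  (Finset.univ.filter fun c : Word n => kw c = k).card

lemma eulerianNumber_eq_permCount (n k : ℕ) : eulerianNumber n k = permCount n k := by
  classical
  rw [eulerianNumber, Nat.card_eq_fintype_card, Fintype.card_subtype, permCount]
  congr 1

lemma nat_card_eq_pathCount (n k : ℕ) :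
    Nat.card {c : ∀ i : Fin n, Fin (i.1 + 2) // kv (extendWord c) n = k}
      = pathCount n k := by
  classical
  rw [Nat.card_eq_fintype_card, Fintype.card_subtype, pathCount]
  congr 1

lemma permCount_zero (k : ℕ) : permCount 0 k = if k = 0 then 1 else 0 := by
  classical
  have hz : ∀ σ : Equiv.Perm (Fin 1), rises σ = 0 := fun σ => by
    simp [rises]
  unfold permCount
  rcases eq_or_ne k 0 with rfl | hk
  · rw [if_pos rfl, Finset.filter_true_of_mem (fun σ _ => hz σ)]
    simp [Finset.card_univ, Fintype.card_perm]
  · rw [if_neg hk, Finset.card_eq_zero.mpr]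
    rw [Finset.filter_eq_empty_iff]
    intro σ _
    rw [hz σ]
    exact fun h => hk h.symm

lemma kw_zero (c : Word 0) : kw c = 0 := rfl

lemma pathCount_zero (k : ℕ) : pathCount 0 k = if k = 0 then 1 else 0 := by
  classical
  unfold pathCount
  rcases eq_or_ne k 0 with rfl | hk
  · rw [if_pos rfl, Finset.filter_true_of_mem (fun c _ => kw_zero c)]
    simp [Finset.card_univ]
  · rw [if_neg hk, Finset.card_eq_zero.mpr]
    rw [Finset.filter_eq_empty_iff]
    intro c _
    rw [kw_zero c]
    exact fun h => hk h.symm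

/-- Common sum manipulation for both recurrences. -/
lemma count_rec {α : Type*} [Fintype α] [DecidableEq ℕ] (f : α → ℕ) (k n : ℕ) :
    (∑ x : α, ((if f x = k then k + 1 else 0) + (if f x + 1 = k then n + 1 - f x else 0)))
      = (k + 1) * (Finset.univ.filter fun x => f x = k).card
        + (if 1 ≤ k then (n + 2 - k) * (Finset.univ.filter fun x => f x = k - 1).card
            else 0) := by
  classical
  rw [Finset.sum_add_distrib]
  congr 1
  · rw [← Finset.sum_filter, Finset.sum_const, smul_eq_mul, mul_comm]
  · rcases Nat.eq_zero_or_pos k with rfl | hk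
    · simp
    · rw [if_pos (show 1 ≤ k from hk)]
      have hpt : ∀ x : α, (if f x + 1 = k then n + 1 - f x else 0)
          = (if f x = k - 1 then n + 2 - k else 0) := by
        intro x
        split_ifs <;> omega
      rw [Finset.sum_congr rfl (fun x _ => hpt x), ← Finset.sum_filter, Finset.sum_const,
        smul_eq_mul, mul_comm]

lemma permCount_succ (n k : ℕ) :
    permCount (n + 1) k
      = (k + 1) * permCount n k
        + (if 1 ≤ k then (n + 2 - k) * permCount n (k - 1) else 0) := by
  classical
  have h1 : permCount (n + 1) k
      = ∑ σ : Equiv.Perm (Fin (n + 1)),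
          (Finset.univ.filter fun p : Fin (n + 2) => rises (ins σ p) = k).card := by
    unfold permCount
    rw [← Fintype.card_subtype]
    rw [Fintype.card_congr ((insEquiv n).subtypeEquiv
      (p := fun q : Equiv.Perm (Fin (n + 1)) × Fin (n + 2) => rises (ins q.1 q.2) = k)
      (q := fun τ => rises τ = k) (fun q => Iff.rfl)).symm]
    rw [Fintype.card_congr
      (Equiv.subtypeProdEquivSigmaSubtype fun (σ : Equiv.Perm (Fin (n + 1)))
        (p : Fin (n + 2)) => rises (ins σ p) = k)]
    rw [Fintype.card_sigma]
    exact Finset.sum_congr rfl fun σ _ => Fintype.card_subtype _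
  rw [h1, Finset.sum_congr rfl fun σ _ => card_pos_count σ k, count_rec]
  rfl

lemma pathCount_succ (n k : ℕ) :
    pathCount (n + 1) k
      = (k + 1) * pathCount n k
        + (if 1 ≤ k then (n + 2 - k) * pathCount n (k - 1) else 0) := by
  classical
  have h1 : pathCount (n + 1) k
      = ∑ c : Word n,
          (Finset.univ.filter fun x : Fin (n + 2) =>
            (if (x : ℕ) ≤ kw c then kw c else kw c + 1) = k).card := by
    unfold pathCount
    rw [← Fintype.card_subtype]
    rw [Fintype.card_congr ((wEquiv n).subtypeEquiv
      (p := fun q : Fin (n + 2) × Word n =>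
        (if (q.1 : ℕ) ≤ kw q.2 then kw q.2 else kw q.2 + 1) = k)
      (q := fun c => kw c = k)
      (fun q => by rcases q with ⟨x, c⟩; simp only [kw_wEquiv])).symm]
    rw [Fintype.card_congr ((Equiv.prodComm (Fin (n + 2)) (Word n)).symm.subtypeEquiv
      (p := fun q : Word n × Fin (n + 2) =>
        (if (q.2 : ℕ) ≤ kw q.1 then kw q.1 else kw q.1 + 1) = k)
      (q := fun q : Fin (n + 2) × Word n =>
        (if (q.1 : ℕ) ≤ kw q.2 then kw q.2 else kw q.2 + 1) = k)
      (fun q => Iff.rfl)).symm]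
    rw [Fintype.card_congr
      (Equiv.subtypeProdEquivSigmaSubtype fun (c : Word n) (x : Fin (n + 2)) =>
        (if (x : ℕ) ≤ kw c then kw c else kw c + 1) = k)]
    rw [Fintype.card_sigma]
    exact Finset.sum_congr rfl fun c _ => Fintype.card_subtype _
  rw [h1, Finset.sum_congr rfl fun c _ => card_letters (kw c) k (kw_le c), count_rec]
  rfl

lemma pathCount_eq_permCount (n : ℕ) : ∀ k, pathCount n k = permCount n k := by
  induction n with
  | zero => intro k; rw [pathCount_zero, permCount_zero]
  | succ n ih =>
    intro k
    rw [pathCount_succ, permCount_succ, ih k, ih (k - 1)]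

end EulerAux

/-- The number of length-`n` edge paths from the root `(0,0)` to the vertex `(n,k)` of
the Euler graph equals the Eulerian number `A(n,k)`. -/
theorem euler_path_count_eq_eulerianNumber (n k : ℕ) (hk : k ≤ n) :
    Nat.card {c : ∀ i : Fin n, Fin (i.1 + 2) // kv (extendWord c) n = k} =
      eulerianNumber n k := by
  rw [EulerAux.nat_card_eq_pathCount, EulerAux.pathCount_eq_permCount,
    EulerAux.eulerianNumber_eq_permCount]
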